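/- (Bound on the diameter.) Let Γ be a connected n-regular simple graph on a finite vertex set V with |V| ≥ 2, with adjacency matrix A, and let λ̃ ∈ [0,1) be such that for every x : V → ℝ with ∑_v x_v = 0 one has xᵀ A x ≤ λ̃ · n · ∑_v x_v². Then the diameter of Γ satisfies diam(Γ) ≤ 2·log(|V|/2)/log((3 − λ̃)/2) + 3. -/
import Mathlib

open Matrix

open Finset in
open Classical in
/-- **Bound on the diameter of a regular spectral expander.** For a connected
`n`-regular simple graph on at least two vertices whose adjacency matrix satisfies the
`λ̃`-expansion inequality with `λ̃ ∈ [0,1)`, the diameter is at most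
`2·log(|V|/2)/log((3-λ̃)/2) + 3`. -/
theorem expander_diameter_bound
    (V : Type*) [Fintype V] [DecidableEq V]
    (hV : 2 ≤ Fintype.card V)
    (Γ : SimpleGraph V) [DecidableRel Γ.Adj]
    (hconn : Γ.Connected)
    (n : ℕ) (hreg : Γ.IsRegularOfDegree n)
    (lam : ℝ) (hlam0 : 0 ≤ lam) (hlam1 : lam < 1)
    (hexp : ∀ x : V → ℝ, (∑ v : V, x v) = 0 →
      x ⬝ᵥ ((Γ.adjMatrix ℝ) *ᵥ x) ≤ lam * n * ∑ v : V, (x v) ^ 2) :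
    (Γ.diam : ℝ)
      ≤ 2 * Real.log ((Fintype.card V : ℝ) / 2) / Real.log ((3 - lam) / 2) + 3 := by
  have hNV : Nonempty V := Fintype.card_pos_iff.mp (by omega)
  set Nr : ℝ := (Fintype.card V : ℝ) with hNrdef
  have hNr2 : (2 : ℝ) ≤ Nr := by rw [hNrdef]; exact_mod_cast hV
  have hNr0 : (0 : ℝ) < Nr := by linarith
  -- the degree is positive
  have hn : 0 < n := by
    have : Nontrivial V := Fintype.one_lt_card_iff_nontrivial.mp (by omega)
    obtain ⟨u0, v0, hne⟩ := exists_pair_ne V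
    obtain ⟨p⟩ := hconn.preconnected u0 v0
    cases p with
    | nil => exact absurd rfl hne
    | cons h _ =>
      have := (Γ.degree_pos_iff_exists_adj u0).mpr ⟨_, h⟩
      rwa [hreg u0] at this
  have hnR : (0 : ℝ) < n := by exact_mod_cast hn
  -- the key spectral consequence: boundary expansion for any vertex set S
  have key : ∀ S : Finset V,
      (1 - lam) * n * S.card * (1 - S.card / Nr)
        ≤ (n : ℝ) * S.card - ∑ v ∈ S, ∑ w ∈ S, (if Γ.Adj v w then (1:ℝ) else 0) := by
    intro S
    set s : ℝ := (S.card : ℝ) with hsdef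
    set a : ℝ := s / Nr with hadef
    set χ : V → ℝ := fun v => if v ∈ S then 1 else 0 with hχdef
    set d : V → ℝ := fun v => ∑ w ∈ S, (if Γ.Adj v w then (1:ℝ) else 0) with hddef
    have haNr : a * Nr = s := by rw [hadef]; field_simp
    have hχsum : ∑ v : V, χ v = s := by
      rw [hχdef, hsdef]
      simp [Finset.sum_ite_mem]
    have hdeg : ∀ v : V, ((Γ.neighborFinset v).card : ℝ) = n := by
      intro v; rw [Γ.card_neighborFinset_eq_degree, hreg v]
    have hrow : ∀ v : V, ∑ w : V, (if Γ.Adj v w then (1:ℝ) else 0) = n := by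
      intro v
      rw [Finset.sum_boole, ← hdeg v]
      congr 1
      · congr 1; ext w; simp [SimpleGraph.mem_neighborFinset]
    have hcol : ∀ w : V, ∑ v : V, (if Γ.Adj v w then (1:ℝ) else 0) = n := by
      intro w
      rw [← hrow w]
      apply Finset.sum_congr rfl
      intro v _
      simp [SimpleGraph.adj_comm]
    have hnbr : ∀ v : V, ∑ w ∈ Γ.neighborFinset v, χ w = d v := by
      intro v
      rw [hχdef, hddef]
      simp only
      have hset : Γ.neighborFinset v ∩ S = S.filter (fun w => Γ.Adj v w) := by
        ext w; simp [SimpleGraph.mem_neighborFinset, and_comm]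
      rw [Finset.sum_ite_mem, hset, Finset.sum_boole, Finset.sum_const]
      simp
    have hdsum : ∑ v : V, d v = n * s := by
      rw [hddef]
      simp only
      rw [Finset.sum_comm]
      rw [Finset.sum_congr rfl (fun w _ => hcol w), Finset.sum_const, hsdef]
      simp [mul_comm]
    have hχd : ∑ v : V, χ v * d v = ∑ v ∈ S, d v := by
      calc ∑ v : V, χ v * d v = ∑ v : V, (if v ∈ S then d v else 0) := by
            apply Finset.sum_congr rfl; intro v _
            rw [hχdef]; dsimp only; split <;> ring
        _ = ∑ v ∈ S, d v := by rw [Finset.sum_ite_mem, Finset.univ_inter]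
    set x : V → ℝ := fun v => χ v - a with hxd
    have hx0 : ∑ v : V, x v = 0 := by
      rw [hxd]
      simp only
      rw [Finset.sum_sub_distrib, hχsum, Finset.sum_const, Finset.card_univ]
      have : (Fintype.card V : ℝ) = Nr := hNrdef.symm
      rw [nsmul_eq_mul, this]
      rw [mul_comm] at haNr ⊢
      linarith [haNr]
    set ES : ℝ := ∑ v ∈ S, d v with hESdef
    have hLHS : x ⬝ᵥ (Γ.adjMatrix ℝ *ᵥ x) = ES - 2 * n * (a * s) + n * (a ^ 2 * Nr) := by
      calc x ⬝ᵥ (Γ.adjMatrix ℝ *ᵥ x)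
          = ∑ v : V, x v * ∑ w ∈ Γ.neighborFinset v, x w := by
            simp [dotProduct, SimpleGraph.adjMatrix_mulVec_apply]
        _ = ∑ v : V, (χ v - a) * (d v - n * a) := by
            apply Finset.sum_congr rfl; intro v _
            rw [hxd]; dsimp only
            congr 1
            rw [Finset.sum_sub_distrib, hnbr v, Finset.sum_const, nsmul_eq_mul, hdeg v]
        _ = ∑ v : V, (χ v * d v - a * d v - n * a * χ v + n * a ^ 2) := by
            apply Finset.sum_congr rfl; intro v _; ring
        _ = (∑ v : V, χ v * d v) - a * (∑ v : V, d v) - n * a * (∑ v : V, χ v)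
              + (Fintype.card V : ℝ) * (n * a ^ 2) := by
            rw [Finset.sum_add_distrib, Finset.sum_sub_distrib, Finset.sum_sub_distrib,
              ← Finset.mul_sum, ← Finset.mul_sum, Finset.sum_const, Finset.card_univ,
              nsmul_eq_mul]
        _ = ES - 2 * n * (a * s) + n * (a ^ 2 * Nr) := by
            rw [hχd, hdsum, hχsum, ← hNrdef]; ring
    have hRHS : ∑ v : V, (x v) ^ 2 = s - 2 * (a * s) + a ^ 2 * Nr := by
      have hχsq : ∀ v : V, (χ v) ^ 2 = χ v := by
        intro v; rw [hχdef]; dsimp only; split <;> norm_num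
      calc ∑ v : V, (x v) ^ 2
          = ∑ v : V, (χ v - 2 * a * χ v + a ^ 2) := by
            apply Finset.sum_congr rfl; intro v _
            rw [hxd]; dsimp only
            rw [sub_sq, hχsq v]; ring
        _ = (∑ v : V, χ v) - 2 * a * (∑ v : V, χ v) + (Fintype.card V : ℝ) * a ^ 2 := by
            rw [Finset.sum_add_distrib, Finset.sum_sub_distrib, ← Finset.mul_sum,
              Finset.sum_const, Finset.card_univ, nsmul_eq_mul]
        _ = s - 2 * (a * s) + a ^ 2 * Nr := by rw [hχsum, ← hNrdef]; ring
    have hmain := hexp x hx0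
    rw [hLHS, hRHS] at hmain
    have e1 : a ^ 2 * Nr = a * s := by rw [sq, mul_assoc, haNr]
    rw [e1] at hmain
    nlinarith [hmain]
  -- balls
  set B : V → ℕ → Finset V := fun u k => univ.filter (fun v => Γ.dist u v ≤ k) with hBdef
  have hBmem : ∀ u k v, v ∈ B u k ↔ Γ.dist u v ≤ k := by
    intro u k v; simp [hBdef]
  have hBsub : ∀ u k, B u k ⊆ B u (k + 1) := by
    intro u k v hv; rw [hBmem] at *; omega
  have hBone : ∀ u k, 1 ≤ (B u k).card := by
    intro u k
    have hu : u ∈ B u k := by rw [hBmem]; exact Nat.zero_le k |>.trans_eq' (by simp)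
    exact Finset.card_pos.mpr ⟨u, hu⟩
  -- growth step
  have step : ∀ u k, (1 - lam) * n * (B u k).card * (1 - (B u k).card / Nr)
      ≤ (n : ℝ) * ((B u (k+1)).card - (B u k).card) := by
    intro u k
    refine (key (B u k)).trans ?_
    have hrow : ∀ v : V, ∑ w : V, (if Γ.Adj v w then (1:ℝ) else 0) = n := by
      intro v
      rw [Finset.sum_boole]
      have h1 : Finset.univ.filter (fun w => Γ.Adj v w) = Γ.neighborFinset v := by
        ext w; simp [SimpleGraph.mem_neighborFinset]
      rw [h1, Γ.card_neighborFinset_eq_degree, hreg v]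
    have hcol : ∀ w : V, ∑ v : V, (if Γ.Adj v w then (1:ℝ) else 0) = n := by
      intro w
      rw [← hrow w]
      apply Finset.sum_congr rfl
      intro v _
      simp [SimpleGraph.adj_comm]
    have hST : ∀ v ∈ B u k, ∀ w : V, Γ.Adj v w → w ∈ B u (k+1) := by
      intro v hv w hadj
      rw [hBmem] at hv ⊢
      have h1 : Γ.dist v w = 1 := SimpleGraph.dist_eq_one_iff_adj.mpr hadj
      have h2 : Γ.dist u w ≤ Γ.dist u v + Γ.dist v w := hconn.dist_triangle
      omega
    have heq1 : (n : ℝ) * (B u k).card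
        - ∑ v ∈ B u k, ∑ w ∈ B u k, (if Γ.Adj v w then (1:ℝ) else 0)
        = ∑ v ∈ B u k, ∑ w ∈ B u (k+1) \ B u k, (if Γ.Adj v w then (1:ℝ) else 0) := by
      have h1 : ∀ v ∈ B u k,
          ∑ w ∈ B u (k+1) \ B u k, (if Γ.Adj v w then (1:ℝ) else 0)
            = (n : ℝ) - ∑ w ∈ B u k, (if Γ.Adj v w then (1:ℝ) else 0) := by
        intro v hv
        have hsub2 : B u (k+1) \ B u k ⊆ Finset.univ \ B u k :=
          Finset.sdiff_subset_sdiff (Finset.subset_univ _) (le_refl _)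
        have h2 : ∑ w ∈ B u (k+1) \ B u k, (if Γ.Adj v w then (1:ℝ) else 0)
            = ∑ w ∈ Finset.univ \ B u k, (if Γ.Adj v w then (1:ℝ) else 0) := by
          apply Finset.sum_subset hsub2
          intro w hw hw2
          rw [Finset.mem_sdiff] at hw
          rw [Finset.mem_sdiff] at hw2
          push_neg at hw2
          split
          · next hadj => exact absurd (hw2 (hST v hv w hadj)) hw.2
          · rfl
        rw [h2]
        have h3 := Finset.sum_sdiff (Finset.subset_univ (B u k))
          (f := fun w => if Γ.Adj v w then (1:ℝ) else 0)
        rw [hrow v] at h3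
        linarith
      rw [Finset.sum_congr rfl h1, Finset.sum_sub_distrib, Finset.sum_const, nsmul_eq_mul]
      ring
    rw [heq1]
    have hle : ∑ v ∈ B u k, ∑ w ∈ B u (k+1) \ B u k, (if Γ.Adj v w then (1:ℝ) else 0)
        ≤ ∑ v : V, ∑ w ∈ B u (k+1) \ B u k, (if Γ.Adj v w then (1:ℝ) else 0) := by
      apply Finset.sum_le_sum_of_subset_of_nonneg (Finset.subset_univ _)
      intro v _ _
      apply Finset.sum_nonneg
      intro w _
      split <;> norm_num
    refine hle.trans ?_
    rw [Finset.sum_comm]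
    rw [Finset.sum_congr rfl (fun w _ => hcol w), Finset.sum_const, nsmul_eq_mul]
    have hcards : ((B u (k+1) \ B u k).card : ℝ) = (B u (k+1)).card - (B u k).card := by
      rw [Finset.card_sdiff_of_subset (hBsub u k)]
      rw [Nat.cast_sub (Finset.card_le_card (hBsub u k))]
    rw [hcards]
    exact le_of_eq (by ring)
  -- geometric growth
  set q : ℝ := (3 - lam) / 2 with hqdef
  have hq1 : 1 < q := by rw [hqdef]; linarith
  have grow : ∀ u k, Nr / 2 < (B u k).card ∨ q ^ k ≤ (B u k).card := by
    intro u k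
    induction k with
    | zero =>
      right
      simpa using (by exact_mod_cast hBone u 0 : (1:ℝ) ≤ (B u 0).card)
    | succ k ih =>
      have hmono : ((B u k).card : ℝ) ≤ (B u (k+1)).card := by
        exact_mod_cast Finset.card_le_card (hBsub u k)
      by_cases hhalf : Nr / 2 < ((B u k).card : ℝ)
      · left; linarith
      · right
        rcases ih with h | h
        · exact absurd h hhalf
        push_neg at hhalf
        have hs := step u k
        have hcard0 : (0:ℝ) ≤ (B u k).card := by positivity
        have h1 : 1 - ((B u k).card : ℝ) / Nr ≥ 1/2 := by
          rw [ge_iff_le, le_sub_iff_add_le]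
          have : ((B u k).card : ℝ) / Nr ≤ 1/2 := by
            rw [div_le_iff₀ hNr0]; linarith
          linarith
        have h2 : q * ((B u k).card : ℝ) ≤ (B u (k+1)).card := by
          have hmul : (1 - lam) * n * (B u k).card * (1/2)
              ≤ (1 - lam) * n * (B u k).card * (1 - (B u k).card / Nr) := by
            apply mul_le_mul_of_nonneg_left (by linarith)
            exact mul_nonneg (mul_nonneg (by linarith) hnR.le) hcard0
          have := hmul.trans hs
          have hdiv : (1 - lam) * (B u k).card * (1/2)
              ≤ ((B u (k+1)).card : ℝ) - (B u k).card := by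
            nlinarith
          rw [hqdef]; nlinarith
        calc q ^ (k+1) = q * q ^ k := by ring
          _ ≤ q * (B u k).card := by
              apply mul_le_mul_of_nonneg_left h (by linarith)
          _ ≤ _ := h2
  -- choose K
  set x : ℝ := Real.log (Nr / 2) / Real.log q with hxdef
  have hlogq : 0 < Real.log q := Real.log_pos hq1
  have hx0 : 0 ≤ x := by
    apply div_nonneg _ hlogq.le
    apply Real.log_nonneg; linarith
  set K : ℕ := ⌊x⌋₊ + 1 with hKdef
  have hqK : Nr / 2 < q ^ K := by
    have hxK : x < (K : ℝ) := by
      rw [hKdef]; push_cast; exact Nat.lt_floor_add_one x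
    have : Real.log (Nr / 2) < K * Real.log q := by
      rw [hxdef] at hxK
      calc Real.log (Nr / 2) = x * Real.log q := by
            rw [hxdef]; field_simp
        _ < K * Real.log q := by
            exact mul_lt_mul_of_pos_right hxK hlogq
    calc Nr / 2 = Real.exp (Real.log (Nr / 2)) := by
          rw [Real.exp_log]; linarith
      _ < Real.exp (K * Real.log q) := Real.exp_lt_exp.mpr this
      _ = q ^ K := by
          rw [← Real.log_pow, Real.exp_log (by positivity)]
  have hballs : ∀ u, Nr / 2 < ((B u K).card : ℝ) := by
    intro u
    rcases grow u K with h | h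
    · exact h
    · linarith
  -- any two balls of radius K intersect
  have hdist : ∀ u v : V, Γ.dist u v ≤ 2 * K := by
    intro u v
    have hcards : Nr < ((B u K).card : ℝ) + ((B v K).card : ℝ) := by
      have := hballs u; have := hballs v; linarith
    have hinter : ((B u K) ∩ (B v K)).Nonempty := by
      rw [← Finset.card_pos]
      have h1 : (B u K ∪ B v K).card + (B u K ∩ B v K).card = (B u K).card + (B v K).card :=
        Finset.card_union_add_card_inter _ _
      have h2 : (B u K ∪ B v K).card ≤ Fintype.card V := Finset.card_le_univ _
      by_contra h
      push_neg at h
      have h4 : (B u K).card + (B v K).card ≤ Fintype.card V := by omega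
      have h5 : ((B u K).card : ℝ) + (B v K).card ≤ Nr := by
        rw [hNrdef]; exact_mod_cast h4
      linarith
    obtain ⟨w, hw⟩ := hinter
    rw [Finset.mem_inter, hBmem, hBmem] at hw
    calc Γ.dist u v ≤ Γ.dist u w + Γ.dist w v := hconn.dist_triangle
      _ ≤ K + K := by
          have := hw.1
          have h2 : Γ.dist w v ≤ K := by rw [SimpleGraph.dist_comm]; exact hw.2
          omega
      _ = 2 * K := by ring
  -- conclude
  obtain ⟨a, b, hab⟩ := Γ.exists_dist_eq_diam
  have hdiam : (Γ.diam : ℝ) ≤ 2 * K := by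
    rw [← hab]; exact_mod_cast hdist a b
  have hKx : (K : ℝ) ≤ x + 1 := by
    rw [hKdef]; push_cast
    have := Nat.floor_le hx0
    linarith
  calc (Γ.diam : ℝ) ≤ 2 * K := hdiam
    _ ≤ 2 * (x + 1) := by linarith
    _ ≤ 2 * x + 3 := by linarith
    _ = 2 * Real.log (Nr / 2) / Real.log q + 3 := by rw [hxdef]; ring
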